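/- Let g be μ-strongly convex and L-smooth, R convex, ψ = g + R with minimum ψ*. Given w with ψ(w) - ψ* ≤ (μL/(2(L²-μ²)))·ε² for some ε > 0, let w⁺ = prox_{R/L}(w - (1/L)∇g(w)) and r = (L·I - ∇²ĝ)(w - w⁺) where the subproblem gradient is quadratic with Hessian B satisfying μI ⪯ B ⪯ LI and r = (L·I - B)(w - w⁺). Then ‖r‖_{B⁻¹} := (rᵀB⁻¹r)^{1/2} ≤ ε. -/

import Mathlib

open Matrix

lemma aux_posdef {d : ℕ} {Bm : Matrix (Fin d) (Fin d) ℝ} {μ : ℝ} (hμ : 0 < μ)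
    (hlow : (Bm - μ • (1 : Matrix (Fin d) (Fin d) ℝ)).PosSemidef) : Bm.PosDef := by
  have h1 : (μ • (1 : Matrix (Fin d) (Fin d) ℝ)).PosDef := by
    rw [smul_one_eq_diagonal]
    exact Matrix.PosDef.diagonal fun _ => hμ
  have := Matrix.PosDef.posSemidef_add hlow h1
  rwa [sub_add_cancel] at this

lemma aux_inv_bound {d : ℕ} {Bm : Matrix (Fin d) (Fin d) ℝ} {μ : ℝ} (hμ : 0 < μ)
    (hsym : Bm.IsSymm)
    (hlow : (Bm - μ • (1 : Matrix (Fin d) (Fin d) ℝ)).PosSemidef) (r : Fin d → ℝ) :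
    r ⬝ᵥ (Bm⁻¹ *ᵥ r) ≤ μ⁻¹ * (r ⬝ᵥ r) := by
  have hpd := aux_posdef hμ hlow
  set y := Bm⁻¹ *ᵥ r with hy
  have hry : Bm *ᵥ y = r := by
    rw [hy, Matrix.mulVec_mulVec, Matrix.mul_nonsing_inv _ hpd.det_pos.ne'.isUnit,
      Matrix.one_mulVec]
  set D := Bm - μ • (1 : Matrix (Fin d) (Fin d) ℝ) with hDdef
  have hDsym : Dᵀ = D := by
    simp [hDdef, Matrix.transpose_sub, Matrix.transpose_smul, hsym.eq]
  have hDD : 0 ≤ y ⬝ᵥ ((D * D) *ᵥ y) := by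
    have h := (Matrix.posSemidef_conjTranspose_mul_self D).dotProduct_mulVec_nonneg y
    rw [star_trivial] at h
    rwa [show Dᴴ = D from by rw [Matrix.conjTranspose_eq_transpose_of_trivial, hDsym]] at h
  have hD : 0 ≤ y ⬝ᵥ (D *ᵥ y) := by simpa using hlow.dotProduct_mulVec_nonneg y
  have hsq : y ⬝ᵥ ((Bm * Bm) *ᵥ y) = (Bm *ᵥ y) ⬝ᵥ (Bm *ᵥ y) := by
    rw [← Matrix.mulVec_mulVec, dotProduct_mulVec, ← Matrix.mulVec_transpose, hsym.eq]
  have hmat : D * D + μ • D = Bm * Bm - μ • Bm := by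
    simp only [hDdef, sub_mul, mul_sub, Matrix.smul_mul, Matrix.mul_smul, smul_sub,
      mul_one, one_mul, smul_smul]
    abel
  have hqf : 0 ≤ y ⬝ᵥ ((D * D + μ • D) *ᵥ y) := by
    simp only [Matrix.add_mulVec, Matrix.smul_mulVec, dotProduct_add, dotProduct_smul,
      smul_eq_mul]
    nlinarith [hDD, hD, hμ]
  rw [hmat] at hqf
  simp only [Matrix.sub_mulVec, Matrix.smul_mulVec, dotProduct_sub, dotProduct_smul,
    smul_eq_mul, hsq, hry] at hqf
  rw [dotProduct_comm]
  have h4 : μ * (y ⬝ᵥ r) ≤ r ⬝ᵥ r := by linarith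
  calc y ⬝ᵥ r = μ⁻¹ * (μ * (y ⬝ᵥ r)) := by field_simp
    _ ≤ μ⁻¹ * (r ⬝ᵥ r) := mul_le_mul_of_nonneg_left h4 (inv_pos.mpr hμ).le

open scoped MatrixOrder in
lemma aux_sq_bound {d : ℕ} {Bm : Matrix (Fin d) (Fin d) ℝ} {μ L : ℝ} (hμL : μ ≤ L)
    (hsym : Bm.IsSymm)
    (hlow : (Bm - μ • (1 : Matrix (Fin d) (Fin d) ℝ)).PosSemidef)
    (hup : (L • (1 : Matrix (Fin d) (Fin d) ℝ) - Bm).PosSemidef) (v : Fin d → ℝ) :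
    ((L • (1 : Matrix (Fin d) (Fin d) ℝ) - Bm) *ᵥ v) ⬝ᵥ
      ((L • (1 : Matrix (Fin d) (Fin d) ℝ) - Bm) *ᵥ v) ≤ (L - μ) ^ 2 * (v ⬝ᵥ v) := by
  set A := L • (1 : Matrix (Fin d) (Fin d) ℝ) - Bm with hAdef
  set c : ℝ := L - μ with hcdef
  set D := Bm - μ • (1 : Matrix (Fin d) (Fin d) ℝ) with hDdef
  have hAsym : Aᵀ = A := by
    simp [hAdef, Matrix.transpose_sub, Matrix.transpose_smul, hsym.eq]
  set S := CFC.sqrt A with hSdef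
  have hSS : S * S = A := CFC.sqrt_mul_sqrt_self A hup.nonneg
  have hSH : Sᴴ = S := (CFC.sqrt_nonneg A).posSemidef.1
  have hSDS : (S * D * S).PosSemidef := by
    have := hlow.mul_mul_conjTranspose_same S
    rwa [hSH] at this
  have hD1 : D = c • (1 : Matrix (Fin d) (Fin d) ℝ) - A := by
    rw [hDdef, hcdef, hAdef, sub_smul]; abel
  have key : S * D * S = c • A - A * A := by
    rw [hD1, mul_sub, sub_mul, mul_smul_comm, mul_one, Matrix.smul_mul, ← hSS]
    rw [show S * (S * S) * S = S * S * (S * S) from by noncomm_ring]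
  have hmat : c • D + S * D * S = (c * c) • (1 : Matrix (Fin d) (Fin d) ℝ) - A * A := by
    rw [key, hD1, smul_sub, smul_smul]
    abel
  have h1 : 0 ≤ v ⬝ᵥ ((c • D) *ᵥ v) := by
    have := hlow.dotProduct_mulVec_nonneg v
    rw [star_trivial] at this
    simp only [Matrix.smul_mulVec, dotProduct_smul, smul_eq_mul]
    have hc : 0 ≤ c := by rw [hcdef]; linarith
    exact mul_nonneg hc this
  have h2 : 0 ≤ v ⬝ᵥ ((S * D * S) *ᵥ v) := by simpa using hSDS.dotProduct_mulVec_nonneg v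
  have hqf : 0 ≤ v ⬝ᵥ ((c • D + S * D * S) *ᵥ v) := by
    rw [Matrix.add_mulVec, dotProduct_add]
    linarith
  rw [hmat] at hqf
  have hsq : v ⬝ᵥ ((A * A) *ᵥ v) = (A *ᵥ v) ⬝ᵥ (A *ᵥ v) := by
    rw [← Matrix.mulVec_mulVec, dotProduct_mulVec, ← Matrix.mulVec_transpose, hAsym]
  simp only [Matrix.sub_mulVec, Matrix.smul_mulVec, dotProduct_sub, dotProduct_smul,
    smul_eq_mul, Matrix.one_mulVec, hsq] at hqf
  have : (L - μ) ^ 2 = c * c := by rw [hcdef]; ring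
  rw [this]
  linarith

lemma aux_quad_val {d : ℕ} (g : EuclideanSpace ℝ (Fin d) → ℝ)
    (g' : EuclideanSpace ℝ (Fin d) → EuclideanSpace ℝ (Fin d))
    (hgrad : ∀ x, HasGradientAt g (g' x) x)
    (w wp : EuclideanSpace ℝ (Fin d)) (B : Matrix (Fin d) (Fin d) ℝ)
    (hquad : ∀ x : EuclideanSpace ℝ (Fin d),
      g' x = g' w + (WithLp.equiv 2 (Fin d → ℝ)).symm (B.mulVec (x - w))) :
    g wp = g w + inner ℝ (g' w) (wp - w) +
      (1 / 2) * dotProduct (B.mulVec (wp - w)) (wp - w) := by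
  set u : EuclideanSpace ℝ (Fin d) := wp - w with hu
  set a : ℝ := inner ℝ (g' w) u with ha
  set b : ℝ := dotProduct (B.mulVec u) u with hb
  have hline : ∀ t : ℝ, HasDerivAt (fun s : ℝ => g (w + s • u)) (a + t * b) t := by
    intro t
    have hc : HasDerivAt (fun s : ℝ => w + s • u) u t := by
      simpa using ((hasDerivAt_id t).smul_const u).const_add w
    have hg := (hgrad (w + t • u)).hasFDerivAt.comp_hasDerivAt t hc
    refine hg.congr_deriv ?_
    symm
    rw [InnerProductSpace.toDual_apply_apply, hquad (w + t • u)]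
    have hsub : (w + t • u) - w = t • u := by abel
    rw [← WithLp.ofLp_sub, hsub, inner_add_left, ← ha]
    congr 1
    have hmv : (B.mulVec ((t • u : EuclideanSpace ℝ (Fin d)) : Fin d → ℝ)) = t • (B.mulVec u) := by
      rw [show ((t • u : EuclideanSpace ℝ (Fin d)) : Fin d → ℝ) = t • (u : Fin d → ℝ) from rfl,
        Matrix.mulVec_smul]
    simp only [PiLp.inner_apply, RCLike.inner_apply, conj_trivial,
      WithLp.equiv_symm_apply, WithLp.ofLp_toLp, hmv, Pi.smul_apply, smul_eq_mul, hb,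
      dotProduct, Finset.mul_sum]
    exact Finset.sum_congr rfl fun i _ => by ring
  have hpoly : ∀ t : ℝ, HasDerivAt (fun s : ℝ => g w + s * a + s ^ 2 / 2 * b) (a + t * b) t := by
    intro t
    have h1 : HasDerivAt (fun s : ℝ => g w + s * a) a t := by
      simpa using ((hasDerivAt_id t).mul_const a).const_add (g w)
    have h2 : HasDerivAt (fun s : ℝ => s ^ 2 / 2 * b) (t * b) t := by
      have := ((hasDerivAt_pow 2 t).div_const 2).mul_const b
      refine this.congr_deriv ?_
      ring
    exact h1.add h2
  have hdiff : ∀ t : ℝ, HasDerivAt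
      (fun s : ℝ => g (w + s • u) - (g w + s * a + s ^ 2 / 2 * b)) 0 t := by
    intro t
    have := (hline t).sub (hpoly t)
    simp only [sub_self] at this
    exact this
  have hconst := is_const_of_deriv_eq_zero (f := fun s : ℝ =>
      g (w + s • u) - (g w + s * a + s ^ 2 / 2 * b))
    (fun t => (hdiff t).differentiableAt) (fun t => (hdiff t).deriv) 1 0
  have h10 : w + (1 : ℝ) • u = wp := by rw [one_smul, hu]; abel
  have h00 : w + (0 : ℝ) • u = w := by rw [zero_smul, add_zero]
  rw [h10, h00] at hconst
  have : g wp = g w + a + 1 / 2 * b := by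
    have h := hconst
    norm_num at h
    linarith
  simpa [ha, hb, hu] using this

lemma aux_prox {d : ℕ} (Rf : EuclideanSpace ℝ (Fin d) → ℝ)
    (hR : ConvexOn ℝ Set.univ Rf) (L : ℝ) (hL : 0 < L)
    (z wp : EuclideanSpace ℝ (Fin d))
    (hprox : IsMinOn (fun u => Rf u / L + (1 / 2) * ‖u - z‖ ^ 2) Set.univ wp)
    (x : EuclideanSpace ℝ (Fin d)) :
    Rf wp / L + (1 / 2) * ‖wp - z‖ ^ 2 + (1 / 2) * ‖x - wp‖ ^ 2 ≤
      Rf x / L + (1 / 2) * ‖x - z‖ ^ 2 := by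
  set P := Rf wp / L with hP
  set Q := Rf x / L with hQ
  set n1 := ‖wp - z‖ ^ 2 with hn1
  set n2 := ‖x - wp‖ ^ 2 with hn2
  set ip : ℝ := inner ℝ (wp - z) (x - wp) with hip
  have hn3 : ‖x - z‖ ^ 2 = n1 + 2 * ip + n2 := by
    have hxz : x - z = (wp - z) + (x - wp) := by abel
    rw [hxz, norm_add_sq_real, hn1, hn2, hip]
  have hkey : ∀ t : ℝ, 0 < t → t < 1 → P ≤ Q + ip + t / 2 * n2 := by
    intro t ht0 ht1
    set y : EuclideanSpace ℝ (Fin d) := wp + t • (x - wp) with hy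
    have hy2 : y = (1 - t) • wp + t • x := by rw [hy]; module
    have hcv : Rf y ≤ (1 - t) * Rf wp + t * Rf x := by
      rw [hy2]
      exact hR.2 (Set.mem_univ wp) (Set.mem_univ x) (by linarith) ht0.le (by ring)
    have hnm : ‖y - z‖ ^ 2 = n1 + 2 * t * ip + t ^ 2 * n2 := by
      have : y - z = (wp - z) + t • (x - wp) := by rw [hy]; abel
      rw [this, norm_add_sq_real, real_inner_smul_right, norm_smul, hn1, hn2, hip]
      rw [mul_pow, Real.norm_eq_abs, sq_abs]
      ring
    have hmin : P + 1 / 2 * n1 ≤ Rf y / L + 1 / 2 * ‖y - z‖ ^ 2 := hprox (Set.mem_univ y)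
    rw [hnm] at hmin
    have hdiv : Rf y / L ≤ ((1 - t) * Rf wp + t * Rf x) / L :=
      div_le_div_of_nonneg_right hcv hL.le
    have h1 : ((1 - t) * Rf wp + t * Rf x) / L = (1 - t) * P + t * Q := by
      rw [hP, hQ]; ring
    have h2 : P + 1 / 2 * n1 ≤ (1 - t) * P + t * Q + 1 / 2 * (n1 + 2 * t * ip + t ^ 2 * n2) := by
      calc P + 1 / 2 * n1 ≤ Rf y / L + 1 / 2 * (n1 + 2 * t * ip + t ^ 2 * n2) := hmin
        _ ≤ _ := by rw [← h1]; linarith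
    have h3 : t * P ≤ t * (Q + ip + t / 2 * n2) := by nlinarith
    exact le_of_mul_le_mul_left (by linarith [h3]) ht0
  have hfin : P ≤ Q + ip := by
    refine le_of_forall_pos_le_add fun ε hε => ?_
    have hn2pos : (0:ℝ) < n2 + 1 := by positivity
    set t := min (1/2 : ℝ) (ε / (n2 + 1)) with htd
    have ht0 : 0 < t := lt_min (by norm_num) (div_pos hε hn2pos)
    have ht1 : t < 1 := lt_of_le_of_lt (min_le_left _ _) (by norm_num)
    have hn2nn : 0 ≤ n2 := by rw [hn2]; positivity
    have htle : t ≤ ε / (n2 + 1) := min_le_right _ _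
    have hsmall : t / 2 * n2 ≤ ε := by
      have h4 : t * n2 ≤ ε / (n2 + 1) * n2 := mul_le_mul_of_nonneg_right htle hn2nn
      have h5 : ε / (n2 + 1) * n2 ≤ ε := by
        rw [div_mul_eq_mul_div, div_le_iff₀ hn2pos]
        nlinarith
      nlinarith
    linarith [hkey t ht0 ht1]
  nlinarith [hfin, hn3]

set_option maxHeartbeats 1000000

/-- Converting a function-value tolerance on the subproblem into a dual-norm
bound on the subgradient residual. -/
theorem stmt_17 {d : ℕ} (g R : EuclideanSpace ℝ (Fin d) → ℝ)
    (g' : EuclideanSpace ℝ (Fin d) → EuclideanSpace ℝ (Fin d))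
    (μ L ε : ℝ) (hμ : 0 < μ) (hμL : μ < L) (hε : 0 < ε)
    (hsc : StrongConvexOn Set.univ μ g)
    (hgrad : ∀ x, HasGradientAt g (g' x) x)
    (hlip : LipschitzWith (Real.toNNReal L) g')
    (hR : ConvexOn ℝ Set.univ R)
    (wmin : EuclideanSpace ℝ (Fin d))
    (hmin : IsMinOn (fun u => g u + R u) Set.univ wmin)
    (w wp : EuclideanSpace ℝ (Fin d))
    (htol : (g w + R w) - (g wmin + R wmin) ≤ μ * L / (2 * (L ^ 2 - μ ^ 2)) * ε ^ 2)
    (hprox : IsMinOn (fun u => R u / L + (1 / 2) * ‖u - (w - L⁻¹ • g' w)‖ ^ 2)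
      Set.univ wp)
    (B : Matrix (Fin d) (Fin d) ℝ) (hBsym : B.IsSymm)
    (hBlow : (B - μ • (1 : Matrix (Fin d) (Fin d) ℝ)).PosSemidef)
    (hBup : (L • (1 : Matrix (Fin d) (Fin d) ℝ) - B).PosSemidef)
    (hquad : ∀ x : EuclideanSpace ℝ (Fin d),
      g' x = g' w + (WithLp.equiv 2 (Fin d → ℝ)).symm (B.mulVec (x - w)))
    (r : Fin d → ℝ)
    (hr : r = (L • (1 : Matrix (Fin d) (Fin d) ℝ) - B).mulVec (w - wp)) :
    Real.sqrt (dotProduct r (B⁻¹.mulVec r)) ≤ ε := by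
  have hL : 0 < L := hμ.trans hμL
  have hLμ : 0 < L ^ 2 - μ ^ 2 := by nlinarith
  -- norm/dotProduct dictionary
  have hbridge : ∀ x y : EuclideanSpace ℝ (Fin d),
      dotProduct (x - y) (x - y) = ‖x - y‖ ^ 2 := by
    intro x y
    rw [← real_inner_self_eq_norm_sq]
    simp only [PiLp.inner_apply, RCLike.inner_apply, conj_trivial, dotProduct, WithLp.ofLp_sub,
      Pi.sub_apply]
  set N : ℝ := ‖wp - w‖ ^ 2 with hN
  set a : ℝ := inner ℝ (g' w) (wp - w) with ha
  -- Step A : quadratic value of g at wp, with B ⪯ L I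
  have hgval := aux_quad_val g g' hgrad w wp B hquad
  have hBub : dotProduct (B.mulVec (wp - w)) (wp - w) ≤ L * N := by
    have h := hBup.dotProduct_mulVec_nonneg (wp - w)
    rw [star_trivial] at h
    simp only [Matrix.sub_mulVec, Matrix.smul_mulVec, dotProduct_sub, dotProduct_smul,
      smul_eq_mul, Matrix.one_mulVec] at h
    have hdc : dotProduct (B.mulVec (wp - w)) (wp - w)
        = dotProduct (wp - w) (B.mulVec (wp - w)) := dotProduct_comm _ _
    rw [hdc]
    have hb2 := hbridge wp w
    rw [hN, ← hb2]
    simp only [WithLp.ofLp_sub, dotProduct_sub, sub_dotProduct] at h ⊢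
    linarith
  have hgub : g wp ≤ g w + a + L / 2 * N := by
    rw [hgval, ← ha]
    nlinarith [hBub]
  -- Step B : prox strong minimality at x = w
  have hpx := aux_prox R hR L hL (w - L⁻¹ • g' w) wp hprox w
  have hwz : w - (w - L⁻¹ • g' w) = L⁻¹ • g' w := by abel
  have hwpz : wp - (w - L⁻¹ • g' w) = (wp - w) + L⁻¹ • g' w := by abel
  have hexp : ‖wp - (w - L⁻¹ • g' w)‖ ^ 2
      = N + 2 * L⁻¹ * a + ‖L⁻¹ • g' w‖ ^ 2 := by
    rw [hwpz, norm_add_sq_real, real_inner_smul_right, hN]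
    have : inner ℝ (wp - w) (g' w) = a := by rw [ha]; exact real_inner_comm _ _
    rw [this]; ring
  have hnormsub : ‖w - wp‖ ^ 2 = N := by rw [hN, norm_sub_rev]
  rw [hexp, hwz, hnormsub] at hpx
  have hRineq : R wp + a + L * N ≤ R w := by
    have h6 : R wp / L + L⁻¹ * a + N ≤ R w / L := by linarith
    have := mul_le_mul_of_nonneg_left h6 hL.le
    have hrw : L * (R wp / L + L⁻¹ * a + N) = R wp + a + L * N := by
      field_simp
    have hrw2 : L * (R w / L) = R w := by field_simp
    rw [hrw, hrw2] at this
    exact this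
  -- Step C : sufficient decrease
  have hdec : g wp + R wp ≤ g w + R w - L / 2 * N := by linarith
  have hminp : g wmin + R wmin ≤ g wp + R wp := hmin (Set.mem_univ wp)
  have hNb : N ≤ μ / (L ^ 2 - μ ^ 2) * ε ^ 2 := by
    have h7 : L / 2 * N ≤ μ * L / (2 * (L ^ 2 - μ ^ 2)) * ε ^ 2 := by linarith
    rw [show μ * L / (2 * (L ^ 2 - μ ^ 2)) * ε ^ 2
      = μ * L * ε ^ 2 / (2 * (L ^ 2 - μ ^ 2)) from by ring] at h7
    have h7' : L / 2 * N * (2 * (L ^ 2 - μ ^ 2)) ≤ μ * L * ε ^ 2 :=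
      (le_div_iff₀ (by positivity)).mp h7
    rw [div_mul_eq_mul_div, le_div_iff₀ hLμ]
    nlinarith [h7', hL]
  -- Step D : matrix bounds
  have hrr : dotProduct r (B⁻¹.mulVec r) ≤ μ⁻¹ * dotProduct r r :=
    aux_inv_bound hμ hBsym hBlow r
  have hr2 : dotProduct r r ≤ (L - μ) ^ 2 * dotProduct (w - wp) (w - wp) := by
    rw [hr]
    exact aux_sq_bound hμL.le hBsym hBlow hBup _
  have hvv : dotProduct (w - wp) (w - wp) = N := by
    rw [hbridge w wp]; exact hnormsub
  rw [hvv] at hr2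
  -- Step E : numerics
  have hch : dotProduct r (B⁻¹.mulVec r) ≤ ε ^ 2 := by
    have h8 : μ⁻¹ * dotProduct r r ≤ μ⁻¹ * ((L - μ) ^ 2 * N) :=
      mul_le_mul_of_nonneg_left hr2 (inv_pos.mpr hμ).le
    have h9 : μ⁻¹ * ((L - μ) ^ 2 * N) ≤ μ⁻¹ * ((L - μ) ^ 2 * (μ / (L ^ 2 - μ ^ 2) * ε ^ 2)) := by
      apply mul_le_mul_of_nonneg_left _ (inv_pos.mpr hμ).le
      apply mul_le_mul_of_nonneg_left hNb (by positivity)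
    have h10 : μ⁻¹ * ((L - μ) ^ 2 * (μ / (L ^ 2 - μ ^ 2) * ε ^ 2))
        = (L - μ) / (L + μ) * ε ^ 2 := by
      have e1 : L - μ ≠ 0 := sub_ne_zero.mpr hμL.ne'
      have e2 : L + μ ≠ 0 := by positivity
      have e3 : μ ≠ 0 := hμ.ne'
      have e4 : L ^ 2 - μ ^ 2 = (L - μ) * (L + μ) := by ring
      rw [e4]
      field_simp
    have h11 : (L - μ) / (L + μ) * ε ^ 2 ≤ ε ^ 2 := by
      have hLpμ : 0 < L + μ := by positivity
      have : (L - μ) / (L + μ) ≤ 1 := by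
        rw [div_le_one hLpμ]; linarith
      nlinarith [sq_nonneg ε]
    linarith
  calc Real.sqrt (dotProduct r (B⁻¹.mulVec r)) ≤ Real.sqrt (ε ^ 2) :=
        Real.sqrt_le_sqrt hch
    _ = ε := Real.sqrt_sq hε.le
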